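/- Fix n and 0 < ε < 1. Under the KW one-step setup, with b > 0, the following one-step mean-square recursion holds: E[(θ_{n+1} − θ*)²] ≤ E[(θ_n − θ*)²]·(1 − (2 − ε)K₁ a_n + 2K₂² a_n²) + 2b² a_n² δ_n^{2β} + c a_n² δ_n^γ + (4b²/(K₁ ε)) a_n δ_n^{2β}. -/

import Mathlib

open MeasureTheory Filter

private lemma memL2_integrable_mul' {Ω : Type*} {m0 : MeasurableSpace Ω} {μ : Measure Ω}
    {f g : Ω → ℝ} (hf : MemLp f 2 μ) (hg : MemLp g 2 μ) :
    Integrable (fun ω => f ω * g ω) μ := by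
  refine Integrable.mono' (hf.integrable_sq.add hg.integrable_sq)
    (hf.aestronglyMeasurable.mul hg.aestronglyMeasurable) ?_
  filter_upwards with ω
  simp only [Pi.add_apply]
  rw [Real.norm_eq_abs, abs_mul]
  nlinarith [abs_nonneg (f ω), abs_nonneg (g ω), sq_abs (f ω), sq_abs (g ω),
    sq_nonneg (|f ω| - |g ω|)]

set_option maxHeartbeats 1000000 in
/-- One-step mean-square recursion for the Kiefer–Wolfowitz iteration. -/
theorem kw_one_step_recursion
    {Ω : Type*} {m0 : MeasurableSpace Ω} {μ : Measure Ω} [IsProbabilityMeasure μ]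
    (𝓕 : MeasurableSpace Ω) (h𝓕 : 𝓕 ≤ m0)
    (J J' : ℝ → ℝ) (hJ : ∀ x, HasDerivAt J (J' x) x)
    (θstar K₁ K₂ : ℝ) (hK₁ : 0 < K₁) (hK₁₂ : K₁ ≤ K₂)
    (hJ'lower : ∀ x : ℝ, K₁ * (x - θstar) ^ 2 ≤ (x - θstar) * J' x)
    (hJ'upper : ∀ x : ℝ, |J' x| ≤ K₂ * |x - θstar|)
    (aₙ δₙ b c β γ : ℝ) (haₙ : 0 < aₙ) (hδₙ : 0 < δₙ) (hb : 0 < b)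
    (hc : 0 ≤ c) (hβ : 0 ≤ β)
    (ε : ℝ) (hε0 : 0 < ε) (hε1 : ε < 1)
    (θn θn1 hn Δn : Ω → ℝ)
    (hθmeas : StronglyMeasurable[𝓕] θn)
    (hθL2 : MemLp θn 2 μ) (hhL2 : MemLp hn 2 μ)
    (hupd : θn1 = fun ω => θn ω - aₙ * hn ω)
    (hbias : μ[hn | 𝓕] =ᵐ[μ] fun ω => J' (θn ω) + Δn ω)
    (hΔ : ∀ᵐ ω ∂μ, |Δn ω| ≤ b * δₙ ^ β)
    (hvar : ∀ᵐ ω ∂μ,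
      (μ[fun ω' => (hn ω' - (μ[hn | 𝓕]) ω') ^ 2 | 𝓕]) ω ≤ c * δₙ ^ γ) :
    ∫ ω, (θn1 ω - θstar) ^ 2 ∂μ ≤
      (∫ ω, (θn ω - θstar) ^ 2 ∂μ) * (1 - (2 - ε) * K₁ * aₙ + 2 * K₂ ^ 2 * aₙ ^ 2)
        + 2 * b ^ 2 * aₙ ^ 2 * δₙ ^ (2 * β) + c * aₙ ^ 2 * δₙ ^ γ
        + (4 * b ^ 2 / (K₁ * ε)) * aₙ * δₙ ^ (2 * β) := by
  -- notation and basic facts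
  have hεK : (0:ℝ) < ε * K₁ := mul_pos hε0 hK₁
  have hXL2 : MemLp (fun ω => θn ω - θstar) 2 μ := hθL2.sub (memLp_const θstar)
  have hXmeas𝓕 : StronglyMeasurable[𝓕] (fun ω => θn ω - θstar) :=
    hθmeas.sub stronglyMeasurable_const
  have hX2int : Integrable (fun ω => (θn ω - θstar) ^ 2) μ := hXL2.integrable_sq
  have hh2int : Integrable (fun ω => hn ω ^ 2) μ := hhL2.integrable_sq
  have hhint : Integrable hn μ := hhL2.integrable one_le_two
  have hXint : Integrable (fun ω => θn ω - θstar) μ := hXL2.integrable one_le_two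
  have hXabsint : Integrable (fun ω => |θn ω - θstar|) μ := hXint.abs
  have hXhint : Integrable (fun ω => (θn ω - θstar) * hn ω) μ :=
    memL2_integrable_mul' hXL2 hhL2
  -- measurability of J'
  have hJ'eq : J' = deriv J := funext fun x => ((hJ x).deriv).symm
  have hJ'meas : Measurable J' := hJ'eq ▸ measurable_deriv J
  have hθmeas0 : Measurable[m0] θn := (hθmeas.mono h𝓕).measurable
  have hJθmeas0 : Measurable[m0] fun ω => J' (θn ω) := hJ'meas.comp hθmeas0
  have hJθmeas : AEStronglyMeasurable[m0] (fun ω => J' (θn ω)) μ :=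
    hJθmeas0.aestronglyMeasurable
  have hJθL2 : MemLp (fun ω => J' (θn ω)) 2 μ := by
    refine MemLp.of_le_mul (c := K₂) hXL2 hJθmeas ?_
    filter_upwards with ω
    simpa [Real.norm_eq_abs] using hJ'upper (θn ω)
  have hmmeas : AEStronglyMeasurable[m0] (μ[hn|𝓕]) μ :=
    (stronglyMeasurable_condExp.mono h𝓕).aestronglyMeasurable
  have hΔmeas : AEStronglyMeasurable[m0] Δn μ := by
    refine AEStronglyMeasurable.congr (hmmeas.sub hJθmeas) ?_
    filter_upwards [hbias] with ω hω
    simp only [Pi.sub_apply]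
    rw [hω]; ring
  have hΔL2 : MemLp Δn 2 μ := by
    refine MemLp.of_bound hΔmeas (b * δₙ ^ β) ?_
    filter_upwards [hΔ] with ω hω
    simpa [Real.norm_eq_abs] using hω
  have hm'L2 : MemLp (fun ω => J' (θn ω) + Δn ω) 2 μ := hJθL2.add hΔL2
  have hmL2 : MemLp (μ[hn|𝓕]) 2 μ := hm'L2.ae_eq hbias.symm
  have hmint : Integrable (μ[hn|𝓕]) μ := integrable_condExp
  have hqL2 : MemLp (fun ω => hn ω - (μ[hn|𝓕]) ω) 2 μ := hhL2.sub hmL2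
  have hqint : Integrable (fun ω => hn ω - (μ[hn|𝓕]) ω) μ := hqL2.integrable one_le_two
  have hq2int : Integrable (fun ω => (hn ω - (μ[hn|𝓕]) ω) ^ 2) μ := hqL2.integrable_sq
  have hmqint : Integrable (fun ω => (μ[hn|𝓕]) ω * (hn ω - (μ[hn|𝓕]) ω)) μ :=
    memL2_integrable_mul' hmL2 hqL2
  have hm2int : Integrable (fun ω => (μ[hn|𝓕]) ω ^ 2) μ := hmL2.integrable_sq
  have hPnn : (0:ℝ) ≤ (δₙ ^ β) ^ 2 := sq_nonneg _
  -- rewrite δₙ ^ (2 * β)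
  have hδ2β : δₙ ^ (2 * β) = (δₙ ^ β) ^ 2 := by
    rw [mul_comm, Real.rpow_mul hδₙ.le, show ((2:ℝ)) = ((2:ℕ):ℝ) by norm_num,
      Real.rpow_natCast]
  -- Step B : lower bound for ∫ X·hn
  have hpull : μ[fun ω => (θn ω - θstar) * hn ω|𝓕]
      =ᵐ[μ] fun ω => (θn ω - θstar) * (μ[hn|𝓕]) ω := by
    exact condExp_mul_of_stronglyMeasurable_left hXmeas𝓕 hXhint hhint
  have hB : ∫ ω, (θn ω - θstar) * hn ω ∂μ
      = ∫ ω, (θn ω - θstar) * (J' (θn ω) + Δn ω) ∂μ := by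
    calc ∫ ω, (θn ω - θstar) * hn ω ∂μ
        = ∫ ω, (μ[fun ω => (θn ω - θstar) * hn ω|𝓕]) ω ∂μ :=
          (integral_condExp h𝓕 (f := fun ω => (θn ω - θstar) * hn ω)).symm
      _ = ∫ ω, (θn ω - θstar) * (J' (θn ω) + Δn ω) ∂μ := by
          refine integral_congr_ae ?_
          filter_upwards [hpull, hbias] with ω h1 h2
          rw [h1, h2]
  have hXm'int : Integrable (fun ω => (θn ω - θstar) * (J' (θn ω) + Δn ω)) μ :=
    memL2_integrable_mul' hXL2 hm'L2
  have hintBlhs : Integrable (fun ω =>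
      K₁ * (θn ω - θstar) ^ 2 - b * δₙ ^ β * |θn ω - θstar|) μ :=
    (hX2int.const_mul _).sub (hXabsint.const_mul _)
  have hBlow : K₁ * ∫ ω, (θn ω - θstar) ^ 2 ∂μ
      - b * δₙ ^ β * ∫ ω, |θn ω - θstar| ∂μ
      ≤ ∫ ω, (θn ω - θstar) * hn ω ∂μ := by
    rw [hB, ← integral_const_mul, ← integral_const_mul,
      ← integral_sub (hX2int.const_mul _) (hXabsint.const_mul _)]
    refine integral_mono_ae hintBlhs hXm'int ?_
    filter_upwards [hΔ] with ω hω
    have h1 := hJ'lower (θn ω)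
    have h2 : -(|θn ω - θstar| * (b * δₙ ^ β)) ≤ (θn ω - θstar) * Δn ω := by
      have ha := neg_abs_le ((θn ω - θstar) * Δn ω)
      rw [abs_mul] at ha
      have hm := mul_le_mul_of_nonneg_left hω (abs_nonneg (θn ω - θstar))
      linarith
    nlinarith [h1, h2]
  -- Step C : decomposition of ∫ hn²
  have hCdecomp : ∫ ω, hn ω ^ 2 ∂μ
      = (∫ ω, (hn ω - (μ[hn|𝓕]) ω) ^ 2 ∂μ)
        + 2 * (∫ ω, (μ[hn|𝓕]) ω * (hn ω - (μ[hn|𝓕]) ω) ∂μ)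
        + ∫ ω, (μ[hn|𝓕]) ω ^ 2 ∂μ := by
    have hi3 : Integrable (fun ω => (hn ω - (μ[hn|𝓕]) ω) ^ 2
        + 2 * ((μ[hn|𝓕]) ω * (hn ω - (μ[hn|𝓕]) ω))) μ :=
      hq2int.add (hmqint.const_mul 2)
    rw [← integral_const_mul, ← integral_add hq2int (hmqint.const_mul 2),
      ← integral_add hi3 hm2int]
    refine integral_congr_ae (Eventually.of_forall fun ω => ?_)
    ring
  -- cross term vanishes
  have hpull2 : μ[fun ω => (μ[hn|𝓕]) ω * (hn ω - (μ[hn|𝓕]) ω)|𝓕]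
      =ᵐ[μ] fun ω => (μ[hn|𝓕]) ω * (μ[fun ω => hn ω - (μ[hn|𝓕]) ω|𝓕]) ω := by
    exact condExp_mul_of_stronglyMeasurable_left stronglyMeasurable_condExp hmqint hqint
  have hq0 : μ[fun ω => hn ω - (μ[hn|𝓕]) ω|𝓕] =ᵐ[μ] 0 := by
    have h1 : μ[fun ω => hn ω - (μ[hn|𝓕]) ω|𝓕] =ᵐ[μ] μ[hn|𝓕] - μ[μ[hn|𝓕]|𝓕] := by
      exact condExp_sub hhint hmint 𝓕
    have h2 : μ[μ[hn|𝓕]|𝓕] = μ[hn|𝓕] :=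
      condExp_of_stronglyMeasurable h𝓕 stronglyMeasurable_condExp integrable_condExp
    rw [h2] at h1
    filter_upwards [h1] with ω hω
    simp only [Pi.sub_apply] at hω
    simpa using hω
  have hcross : ∫ ω, (μ[hn|𝓕]) ω * (hn ω - (μ[hn|𝓕]) ω) ∂μ = 0 := by
    calc ∫ ω, (μ[hn|𝓕]) ω * (hn ω - (μ[hn|𝓕]) ω) ∂μ
        = ∫ ω, (μ[fun ω => (μ[hn|𝓕]) ω * (hn ω - (μ[hn|𝓕]) ω)|𝓕]) ω ∂μ :=
          (integral_condExp h𝓕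
            (f := fun ω => (μ[hn|𝓕]) ω * (hn ω - (μ[hn|𝓕]) ω))).symm
      _ = ∫ _ω, (0:ℝ) ∂μ := by
          refine integral_congr_ae ?_
          filter_upwards [hpull2, hq0] with ω h1 h2
          simp only [Pi.zero_apply] at h2 ⊢
          rw [h1, h2, mul_zero]
      _ = 0 := integral_zero _ _
  -- conditional variance bound
  have hE1 : ∫ ω, (hn ω - (μ[hn|𝓕]) ω) ^ 2 ∂μ ≤ c * δₙ ^ γ := by
    calc ∫ ω, (hn ω - (μ[hn|𝓕]) ω) ^ 2 ∂μ
        = ∫ ω, (μ[fun ω' => (hn ω' - (μ[hn|𝓕]) ω') ^ 2|𝓕]) ω ∂μ :=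
          (integral_condExp h𝓕
            (f := fun ω' => (hn ω' - (μ[hn|𝓕]) ω') ^ 2)).symm
      _ ≤ ∫ _ω, c * δₙ ^ γ ∂μ :=
          integral_mono_ae integrable_condExp (integrable_const _) hvar
      _ = c * δₙ ^ γ := by simp
  -- second moment of conditional mean
  have hE3 : ∫ ω, (μ[hn|𝓕]) ω ^ 2 ∂μ
      ≤ 2 * K₂ ^ 2 * (∫ ω, (θn ω - θstar) ^ 2 ∂μ) + 2 * b ^ 2 * (δₙ ^ β) ^ 2 := by
    have h1 : ∫ ω, (μ[hn|𝓕]) ω ^ 2 ∂μ = ∫ ω, (J' (θn ω) + Δn ω) ^ 2 ∂μ := by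
      refine integral_congr_ae ?_
      filter_upwards [hbias] with ω hω
      rw [hω]
    rw [h1]
    have h2 : ∫ ω, (J' (θn ω) + Δn ω) ^ 2 ∂μ
        ≤ ∫ ω, (2 * K₂ ^ 2 * (θn ω - θstar) ^ 2 + 2 * b ^ 2 * (δₙ ^ β) ^ 2) ∂μ := by
      refine integral_mono_ae hm'L2.integrable_sq
        ((hX2int.const_mul _).add (integrable_const _)) ?_
      filter_upwards [hΔ] with ω hω
      have h3 := hJ'upper (θn ω)
      have e1 : J' (θn ω) ^ 2 ≤ K₂ ^ 2 * (θn ω - θstar) ^ 2 := by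
        nlinarith [abs_nonneg (J' (θn ω)), abs_nonneg (θn ω - θstar),
          sq_abs (J' (θn ω)), sq_abs (θn ω - θstar)]
      have e2 : Δn ω ^ 2 ≤ b ^ 2 * (δₙ ^ β) ^ 2 := by
        nlinarith [abs_nonneg (Δn ω), sq_abs (Δn ω),
          mul_pos hb (Real.rpow_pos_of_pos hδₙ β)]
      nlinarith [sq_nonneg (J' (θn ω) - Δn ω)]
    rw [integral_add (hX2int.const_mul _) (integrable_const _),
      integral_const_mul, integral_const] at h2
    simpa using h2
  have hC : ∫ ω, hn ω ^ 2 ∂μ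
      ≤ c * δₙ ^ γ + 2 * K₂ ^ 2 * (∫ ω, (θn ω - θstar) ^ 2 ∂μ)
        + 2 * b ^ 2 * (δₙ ^ β) ^ 2 := by
    rw [hCdecomp, hcross]
    linarith
  -- Young's inequality term
  have hYoung : 2 * b * δₙ ^ β * (∫ ω, |θn ω - θstar| ∂μ)
      ≤ ε * K₁ * (∫ ω, (θn ω - θstar) ^ 2 ∂μ) + b ^ 2 * (δₙ ^ β) ^ 2 / (ε * K₁) := by
    have h1 : ∫ ω, 2 * b * δₙ ^ β * |θn ω - θstar| ∂μ
        ≤ ∫ ω, (ε * K₁ * (θn ω - θstar) ^ 2 + b ^ 2 * (δₙ ^ β) ^ 2 / (ε * K₁)) ∂μ := by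
      refine integral_mono_ae (hXabsint.const_mul _)
        ((hX2int.const_mul _).add (integrable_const _)) ?_
      filter_upwards with ω
      have h4 : (2 * b * δₙ ^ β * |θn ω - θstar|) * (ε * K₁)
          ≤ (ε * K₁ * (θn ω - θstar) ^ 2 + b ^ 2 * (δₙ ^ β) ^ 2 / (ε * K₁)) * (ε * K₁) := by
        rw [add_mul, div_mul_cancel₀ _ hεK.ne']
        have h5 : (ε * K₁) ^ 2 * (θn ω - θstar) ^ 2
            = (ε * K₁ * |θn ω - θstar|) ^ 2 := by rw [mul_pow (ε * K₁) |θn ω - θstar| 2, sq_abs]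
        nlinarith [sq_nonneg (ε * K₁ * |θn ω - θstar| - b * δₙ ^ β), h5]
      exact le_of_mul_le_mul_right h4 hεK
    rw [integral_const_mul, integral_add (hX2int.const_mul _) (integrable_const _),
      integral_const_mul, integral_const] at h1
    simpa using h1
  -- expansion of the next-step error
  have hExpand : ∫ ω, (θn1 ω - θstar) ^ 2 ∂μ
      = (∫ ω, (θn ω - θstar) ^ 2 ∂μ)
        - 2 * aₙ * (∫ ω, (θn ω - θstar) * hn ω ∂μ)
        + aₙ ^ 2 * (∫ ω, hn ω ^ 2 ∂μ) := by
    have hi1 : Integrable (fun ω => 2 * aₙ * ((θn ω - θstar) * hn ω)) μ :=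
      hXhint.const_mul _
    have hi2 : Integrable (fun ω => aₙ ^ 2 * hn ω ^ 2) μ := hh2int.const_mul _
    calc ∫ ω, (θn1 ω - θstar) ^ 2 ∂μ
        = ∫ ω, ((θn ω - θstar) ^ 2 - 2 * aₙ * ((θn ω - θstar) * hn ω)
            + aₙ ^ 2 * hn ω ^ 2) ∂μ := by
          rw [hupd]
          exact integral_congr_ae (Eventually.of_forall fun ω => by ring)
      _ = (∫ ω, (θn ω - θstar) ^ 2 ∂μ)
          - 2 * aₙ * (∫ ω, (θn ω - θstar) * hn ω ∂μ)
          + aₙ ^ 2 * (∫ ω, hn ω ^ 2 ∂μ) := by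
          have hi0 : Integrable (fun ω => (θn ω - θstar) ^ 2
              - 2 * aₙ * ((θn ω - θstar) * hn ω)) μ := hX2int.sub hi1
          rw [integral_add hi0 hi2, integral_sub hX2int hi1,
            integral_const_mul, integral_const_mul]
  -- final assembly
  rw [hExpand, hδ2β]
  set A := ∫ ω, (θn ω - θstar) ^ 2 ∂μ with hA
  set B := ∫ ω, (θn ω - θstar) * hn ω ∂μ with hBdef
  set C := ∫ ω, hn ω ^ 2 ∂μ with hCdef
  set D := ∫ ω, |θn ω - θstar| ∂μ with hD
  have t1 : aₙ ^ 2 * C ≤ aₙ ^ 2 * (c * δₙ ^ γ + 2 * K₂ ^ 2 * A + 2 * b ^ 2 * (δₙ ^ β) ^ 2) :=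
    mul_le_mul_of_nonneg_left hC (sq_nonneg aₙ)
  have t2 : 2 * aₙ * (K₁ * A - b * δₙ ^ β * D) ≤ 2 * aₙ * B :=
    mul_le_mul_of_nonneg_left hBlow (by positivity)
  have t3 : aₙ * (2 * b * δₙ ^ β * D)
      ≤ aₙ * (ε * K₁ * A + b ^ 2 * (δₙ ^ β) ^ 2 / (ε * K₁)) :=
    mul_le_mul_of_nonneg_left hYoung haₙ.le
  have hdiv : aₙ * (b ^ 2 * (δₙ ^ β) ^ 2 / (ε * K₁))
      ≤ 4 * b ^ 2 / (K₁ * ε) * aₙ * (δₙ ^ β) ^ 2 := by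
    have hb4 : b ^ 2 / (ε * K₁) ≤ 4 * b ^ 2 / (ε * K₁) := by
      gcongr
      nlinarith [sq_nonneg b]
    calc aₙ * (b ^ 2 * (δₙ ^ β) ^ 2 / (ε * K₁))
        = b ^ 2 / (ε * K₁) * (aₙ * (δₙ ^ β) ^ 2) := by ring
      _ ≤ 4 * b ^ 2 / (ε * K₁) * (aₙ * (δₙ ^ β) ^ 2) :=
          mul_le_mul_of_nonneg_right hb4 (by positivity)
      _ = 4 * b ^ 2 / (K₁ * ε) * aₙ * (δₙ ^ β) ^ 2 := by rw [mul_comm ε K₁]; ring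
  linarith [t1, t2, t3, hdiv]
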